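/- Let k be a field, let S be an integral domain that is essentially of finite type over k, and let f, g be nonzero elements of S with Q := (f,g)S ≠ S. Set R = k + Q и suppose R ≠ S. Then the sequence f, g is not a regular sequence on R. (Indeed, the first Čech cohomology H¹_{f,g}(R) is nonzero because S/R is a nonzero module annihilated by f and g.) -/
import Mathlib


/-- For an ideal `Q` of a commutative `k`-algebra `S`, the subalgebra `k + Q` of `S`,
consisting of all elements of the form `c • 1 + q` with `c ∈ k`, `q ∈ Q`. -/
def kPlus (k : Type*) {S : Type*} [CommRing k] [CommRing S] [Algebra k S]
    (Q : Ideal S) : Subalgebra k S where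
  carrier := {s : S | ∃ c : k, s - algebraMap k S c ∈ Q}
  add_mem' := by
    rintro a b ⟨c, hc⟩ ⟨d, hd⟩
    exact ⟨c + d, by rw [map_add]; convert Q.add_mem hc hd using 1; ring⟩
  mul_mem' := by
    rintro a b ⟨c, hc⟩ ⟨d, hd⟩
    refine ⟨c * d, ?_⟩
    have : a * b - algebraMap k S (c * d)
        = a * (b - algebraMap k S d) + algebraMap k S d * (a - algebraMap k S c) := by
      rw [map_mul]; ring
    rw [this]
    exact Q.add_mem (Q.mul_mem_left _ hd) (Q.mul_mem_left _ hc)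
  algebraMap_mem' := fun c => ⟨c, by simp⟩

set_option synthInstance.maxHeartbeats 1000000 in
set_option maxHeartbeats 2000000 in
/-- Let `k` be a field, `S` a domain essentially of finite type over `k`,
and `f, g` nonzero elements of `S` with `Q = (f,g)S ≠ S`.  Set `R = k + Q` and suppose
`R ≠ S`.  Then `f, g` is not a regular sequence on `R`. -/
theorem kPlus_f_g_not_regularSequence (k : Type*) [Field k]
    (S : Type*) [CommRing S] [IsDomain S] [Algebra k S] [Algebra.EssFiniteType k S]
    (f g : S) (hf : f ≠ 0) (hg : g ≠ 0)
    (hQ : Ideal.span {f, g} ≠ ⊤) (hRS : kPlus k (Ideal.span {f, g}) ≠ ⊤) :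
    ¬ RingTheory.Sequence.IsRegular ↥(kPlus k (Ideal.span {f, g}))
        [(⟨f, 0, by rw [map_zero, sub_zero]; exact Ideal.subset_span (Set.mem_insert f {g})⟩ :
            ↥(kPlus k (Ideal.span {f, g}))),
         (⟨g, 0,
            by rw [map_zero, sub_zero]; exact Ideal.subset_span (Set.mem_insert_of_mem f rfl)⟩ :
            ↥(kPlus k (Ideal.span {f, g})))] := by
  intro hreg
  set Q : Ideal S := Ideal.span {f, g} with hQdef
  set R : Subalgebra k S := kPlus k Q with hRdef
  set a : R := ⟨f, 0, by rw [map_zero, sub_zero]; exact Ideal.subset_span (Set.mem_insert f {g})⟩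
    with ha
  set b : R := ⟨g, 0, by
    rw [map_zero, sub_zero]; exact Ideal.subset_span (Set.mem_insert_of_mem f rfl)⟩ with hb
  -- extract regularity of b on R ⧸ aR
  have hw := hreg.toIsWeaklyRegular
  rw [RingTheory.Sequence.isWeaklyRegular_cons_iff,
    RingTheory.Sequence.isWeaklyRegular_singleton_iff] at hw
  obtain ⟨-, h2⟩ := hw
  -- pick s ∉ R
  obtain ⟨s, hs⟩ : ∃ s : S, s ∉ R := by
    by_contra h
    push_neg at h
    exact hRS (eq_top_iff.mpr fun x _ => h x)
  have hfs : f * s ∈ R := ⟨0, by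
    rw [map_zero, sub_zero]
    exact Ideal.mul_mem_right s _ (Ideal.subset_span (Set.mem_insert f {g}))⟩
  have hgs : g * s ∈ R := ⟨0, by
    rw [map_zero, sub_zero]
    exact Ideal.mul_mem_right s _ (Ideal.subset_span (Set.mem_insert_of_mem f rfl))⟩
  set u : R := ⟨f * s, hfs⟩ with hu
  set v : R := ⟨g * s, hgs⟩ with hv
  have key : b • u = a • v := by
    apply Subtype.ext
    show g * (f * s) = f * (g * s)
    ring
  have hmk : (Submodule.Quotient.mk u : QuotSMulTop a R) = 0 := by
    apply h2
    show b • (Submodule.Quotient.mk u : QuotSMulTop a R) = b • 0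
    rw [← Submodule.Quotient.mk_smul, smul_zero, key, Submodule.Quotient.mk_eq_zero]
    exact Submodule.smul_mem_pointwise_smul v a ⊤ trivial
  rw [Submodule.Quotient.mk_eq_zero] at hmk
  rw [← SetLike.mem_coe, Submodule.coe_pointwise_smul] at hmk
  obtain ⟨r, -, hr⟩ := Set.mem_smul_set.mp hmk
  -- a • r = u means f * r = f * s in S, so s = r ∈ R
  have : f * (r : S) = f * s := congrArg Subtype.val hr
  have hsr : (r : S) = s := mul_left_cancel₀ hf this
  exact hs (hsr ▸ r.2)
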